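/- Let T >= 1 and 1 <= q <= T be integers and let theta : {1,...,T} -> Real. Then there exists a pair (u, w) feasible for theta and q such that sum_{t=1}^T u_t + sum_{k=1}^T w_k = sum_{t=1}^q theta_{(t)}, the ordered q-sum of theta. Consequently, the maximum of sum_t u_t + sum_k w_k over all feasible pairs (u, w) equals the ordered q-sum of theta. (A maximizer is given by u_t = min(theta_t, r), w_k = 0 for k <= q and w_k = -r for k > q, where r = theta_{(q)}.) -/
import Mathlib


/-- The ordered `q`-sum of `theta`: the sum of the `q` smallest components of `theta`,
expressed via the sorting permutation `Tuple.sort theta` (so that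
`theta ∘ Tuple.sort theta` is the non-decreasing rearrangement of `theta`). -/
noncomputable def orderedQSum (T q : ℕ) (theta : Fin T → ℝ) : ℝ :=
  ∑ t ∈ Finset.univ.filter (fun t : Fin T => (t : ℕ) < q), theta (Tuple.sort theta t)

/-- Feasibility of a pair `(u, w)` for the linear reformulation of the
ordered `q`-sum objective. -/
def Feasible (T q : ℕ) (theta u w : Fin T → ℝ) : Prop :=
  (∀ t k : Fin T, (k : ℕ) < q → u t + w k ≤ theta t) ∧
  (∀ t k : Fin T, q ≤ (k : ℕ) → u t + w k ≤ 0)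

theorem stmt_10 (T q : ℕ) (hT : 1 ≤ T) (hq1 : 1 ≤ q) (hqT : q ≤ T)
    (theta : Fin T → ℝ) :
    IsGreatest
      {s : ℝ | ∃ u w : Fin T → ℝ, Feasible T q theta u w ∧
        s = (∑ t, u t) + (∑ k, w k)}
      (orderedQSum T q theta) := by
  set σ := Tuple.sort theta with hσ
  have hmono : Monotone (theta ∘ σ) := Tuple.monotone_sort theta
  have hq1T : q - 1 < T := lt_of_lt_of_le (Nat.sub_lt hq1 one_pos) hqT
  set r : ℝ := theta (σ ⟨q - 1, hq1T⟩) with hr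
  constructor
  · -- membership
    refine ⟨fun t => min (theta t) r, fun k => if (k : ℕ) < q then 0 else -r, ⟨?_, ?_⟩, ?_⟩
    · intro t k hk
      simp [hk, min_le_left]
    · intro t k hk
      have : ¬ (k : ℕ) < q := not_lt.mpr hk
      simp only [this, if_false]
      have := min_le_right (theta t) r
      linarith
    · -- sum computation
      have hperm : ∑ t, min (theta t) r = ∑ t, min (theta (σ t)) r := by
        exact (Equiv.sum_comp σ (fun t => min (theta t) r)).symm
      have hmin : ∀ t : Fin T, min (theta (σ t)) r
          = if (t : ℕ) < q then theta (σ t) else r := by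
        intro t
        by_cases ht : (t : ℕ) < q
        · have hle : theta (σ t) ≤ r := by
            have : t ≤ (⟨q - 1, hq1T⟩ : Fin T) := by
              simpa [Fin.le_def] using Nat.le_sub_one_of_lt ht
            exact hmono this
          simp [ht, hle]
        · have hge : r ≤ theta (σ t) := by
            have : (⟨q - 1, hq1T⟩ : Fin T) ≤ t := by
              simp [Fin.le_def]
              omega
            exact hmono this
          simp [ht, min_eq_right hge]
      have hcardlt : (Finset.univ.filter (fun t : Fin T => (t : ℕ) < q)).card = q := by
        have : (Finset.univ.filter (fun t : Fin T => (t : ℕ) < q))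
            = Finset.map (Fin.castLEEmb hqT) Finset.univ := by
          ext x
          simp only [Finset.mem_filter, Finset.mem_univ, true_and, Finset.mem_map]
          constructor
          · intro hx
            exact ⟨⟨x, hx⟩, by simp [Fin.ext_iff]⟩
          · rintro ⟨y, -, rfl⟩
            simpa using y.isLt
        simp [this]
      have hcardge : (Finset.univ.filter (fun t : Fin T => ¬ (t : ℕ) < q)).card = T - q := by
        have := Finset.card_filter_add_card_filter_not
          (s := (Finset.univ : Finset (Fin T))) (p := fun t : Fin T => (t : ℕ) < q)
        simp only [Finset.card_univ, Fintype.card_fin] at this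
        omega
      have hcardge' : (Finset.univ.filter (fun t : Fin T => q ≤ (t : ℕ))).card = T - q := by
        rw [← hcardge]; congr 1; ext x; simp [not_lt]
      have h1 : (∑ t : Fin T, if (t : ℕ) < q then theta (σ t) else r)
          = orderedQSum T q theta + (T - q : ℕ) * r := by
        rw [Finset.sum_ite]
        simp [orderedQSum, hcardge', Finset.sum_const, nsmul_eq_mul, hσ]
      have h2 : (∑ k : Fin T, if (k : ℕ) < q then (0:ℝ) else -r)
          = -((T - q : ℕ) * r) := by
        rw [Finset.sum_ite]
        simp [hcardge', nsmul_eq_mul]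
      rw [hperm, Finset.sum_congr rfl (fun t _ => hmin t), h1, h2]
      ring
  · -- upper bound
    rintro s ⟨u, w, ⟨hf1, hf2⟩, rfl⟩
    have key : ∀ t : Fin T, u (σ t) + w t ≤ if (t : ℕ) < q then theta (σ t) else (0:ℝ) := by
      intro t
      by_cases ht : (t : ℕ) < q
      · simpa [ht] using hf1 (σ t) t ht
      · simpa [ht] using hf2 (σ t) t (not_lt.mp ht)
    have hsum : ∑ t, (u (σ t) + w t) ≤ ∑ t : Fin T, (if (t : ℕ) < q then theta (σ t) else 0) :=
      Finset.sum_le_sum fun t _ => key t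
    have hL : ∑ t, (u (σ t) + w t) = (∑ t, u t) + (∑ k, w k) := by
      rw [Finset.sum_add_distrib, Equiv.sum_comp σ u]
    have hR : ∑ t : Fin T, (if (t : ℕ) < q then theta (σ t) else 0) = orderedQSum T q theta := by
      rw [Finset.sum_ite, Finset.sum_const_zero, add_zero]
      rfl
    rw [← hL]
    rw [hR] at hsum
    exact hsum
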